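/- For every k ∈ ℤ there exists a constant C > 0 such that for all integers d with d > 2|k| + 2, d·E[((ξ_d/d)^{k/2} − 1)²] ≤ C, where ξ_d is a chi-squared random variable with d degrees of freedom. -/

import Mathlib

open MeasureTheory ENNReal Filter Topology

noncomputable section

/-- The chi-squared distribution with `d` degrees of freedom: the measure on `(0,∞)`
with density `x ↦ (1/2)^{d/2} Γ(d/2)⁻¹ x^{d/2-1} e^{-x/2}`. -/
def chiSq (d : ℕ) : Measure ℝ :=
  (volume.restrict (Set.Ioi 0)).withDensity fun x =>
    ENNReal.ofReal ((1 / 2 : ℝ) ^ ((d : ℝ) / 2) / Real.Gamma ((d : ℝ) / 2) *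
      x ^ ((d : ℝ) / 2 - 1) * Real.exp (-x / 2))

lemma chiSq_ae_pos (d : ℕ) : ∀ᵐ x ∂(chiSq d), 0 < x := by
  have h : ∀ᵐ x ∂(volume.restrict (Set.Ioi (0:ℝ))), 0 < x := ae_restrict_mem measurableSet_Ioi
  exact (withDensity_absolutelyContinuous _ _).ae_le h

lemma chiSq_rpow (d : ℕ) (hd : 0 < d) {s : ℝ} (hs : 0 < (d:ℝ)/2 + s) :
    Integrable (fun x : ℝ => x ^ s) (chiSq d) ∧
    ∫ x, x ^ s ∂(chiSq d)
      = 2 ^ s * Real.Gamma ((d:ℝ)/2 + s) / Real.Gamma ((d:ℝ)/2) := by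
  have ha0 : 0 < (d:ℝ)/2 := by positivity
  set a : ℝ := (d:ℝ)/2 with ha
  have hΓ : 0 < Real.Gamma a := Real.Gamma_pos_of_pos ha0
  set c : ℝ := (1/2:ℝ) ^ a / Real.Gamma a with hc
  have hc0 : 0 < c := by positivity
  set ρ : ℝ → ℝ := fun x => c * x ^ (a - 1) * Real.exp (-x / 2) with hρ
  have hρm : Measurable ρ := by
    unfold ρ; fun_prop
  have hmeas : Measurable fun x => (ρ x).toNNReal := hρm.real_toNNReal
  have hch : chiSq d = (volume.restrict (Set.Ioi 0)).withDensity
      (fun x => ((ρ x).toNNReal : ℝ≥0∞)) := rfl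
  have hint : IntegrableOn (fun x : ℝ => x ^ (a + s - 1) * Real.exp (-(2⁻¹ * x)))
      (Set.Ioi 0) := by
    have := integrableOn_rpow_mul_exp_neg_mul_rpow (p := 1) (s := a + s - 1) (b := 2⁻¹)
      (by linarith) (by norm_num) (by norm_num)
    simpa using this
  have hkey : ∀ x ∈ Set.Ioi (0:ℝ),
      (ρ x).toNNReal • (x ^ s) = c * (x ^ (a + s - 1) * Real.exp (-(2⁻¹ * x))) := by
    intro x hx
    rw [Set.mem_Ioi] at hx
    have hρpos : 0 ≤ ρ x := by
      have : (0:ℝ) < x ^ (a-1) := Real.rpow_pos_of_pos hx _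
      positivity
    rw [NNReal.smul_def, Real.coe_toNNReal _ hρpos, smul_eq_mul]
    have hxx : x ^ (a + s - 1) = x ^ (a - 1) * x ^ s := by
      rw [← Real.rpow_add hx]; ring_nf
    rw [hxx, show -(2⁻¹*x) = -x/2 by ring]
    show c * x ^ (a - 1) * Real.exp (-x / 2) * x ^ s = _
    ring
  constructor
  · rw [hch, integrable_withDensity_iff_integrable_smul hmeas]
    refine (hint.const_mul c).congr ?_
    exact ae_restrict_of_forall_mem measurableSet_Ioi fun x hx => (hkey x hx).symm
  · rw [hch, integral_withDensity_eq_integral_smul hmeas,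
      setIntegral_congr_fun measurableSet_Ioi hkey, integral_const_mul,
      Real.integral_rpow_mul_exp_neg_mul_Ioi (by linarith) (by norm_num : (0:ℝ) < 2⁻¹)]
    rw [show (1/(2⁻¹):ℝ) = 2 by norm_num, Real.rpow_add two_pos, hc,
      show (1/2:ℝ) = 2⁻¹ by norm_num, Real.inv_rpow (by norm_num : (0:ℝ) ≤ 2)]
    have h2a : (0:ℝ) < 2 ^ a := Real.rpow_pos_of_pos two_pos a
    field_simp

lemma core_pointwise (n : ℕ) (hn : 1 ≤ n) {t : ℝ} (ht : 0 < t) :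
    (t ^ ((n:ℝ)/2) - 1)^2 ≤ (n:ℝ)^2 * ((t-1)^2 * (1 + t ^ ((n:ℝ)-1))) := by
  set s := Real.sqrt t with hsdef
  have hs : 0 < s := Real.sqrt_pos.2 ht
  have hst : s^2 = t := Real.sq_sqrt ht.le
  have h1 : t ^ ((n:ℝ)/2) = s ^ n := by
    rw [show (n:ℝ)/2 = (1/2) * (n:ℝ) by ring, Real.rpow_mul ht.le, ← Real.sqrt_eq_rpow,
      ← hsdef, Real.rpow_natCast]
  have hgeom : s ^ n - 1 = (∑ i ∈ Finset.range n, s ^ i) * (s - 1) := (geom_sum_mul s n).symm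
  have hsum0 : 0 ≤ ∑ i ∈ Finset.range n, s ^ i :=
    Finset.sum_nonneg fun i _ => pow_nonneg hs.le i
  have hs1 : (s-1)^2 ≤ (t-1)^2 := by nlinarith [sq_nonneg (s+1), sq_nonneg (s-1), sq_nonneg s]
  have htpow : (0:ℝ) ≤ t ^ ((n:ℝ)-1) := (Real.rpow_pos_of_pos ht _).le
  have htn1 : t ^ ((n:ℝ)-1) = s ^ (2*(n-1)) := by
    rw [show (n:ℝ)-1 = ((n-1:ℕ):ℝ) by push_cast [hn]; ring, Real.rpow_natCast, ← hst,
      ← pow_mul]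
  have hsumsq : (∑ i ∈ Finset.range n, s ^ i)^2 ≤ (n:ℝ)^2 * (1 + t ^ ((n:ℝ)-1)) := by
    rcases le_total s 1 with hle | hle
    · have hsum : (∑ i ∈ Finset.range n, s ^ i) ≤ (n:ℝ) := by
        calc (∑ i ∈ Finset.range n, s ^ i) ≤ ∑ i ∈ Finset.range n, (1:ℝ) :=
              Finset.sum_le_sum fun i _ => pow_le_one₀ hs.le hle
          _ = (n:ℝ) := by simp
      nlinarith
    · have hsum : (∑ i ∈ Finset.range n, s ^ i) ≤ (n:ℝ) * s ^ (n-1) := by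
        calc (∑ i ∈ Finset.range n, s ^ i) ≤ ∑ i ∈ Finset.range n, s ^ (n-1) :=
              Finset.sum_le_sum fun i hi => pow_le_pow_right₀ hle
                (by have := Finset.mem_range.1 hi; omega)
          _ = (n:ℝ) * s ^ (n-1) := by rw [Finset.sum_const, Finset.card_range]; ring
      have h2 : ((n:ℝ) * s ^ (n-1))^2 = (n:ℝ)^2 * s ^ (2*(n-1)) := by
        rw [mul_pow, ← pow_mul]; ring_nf
      have hspow : (0:ℝ) ≤ s ^ (n-1) := pow_nonneg hs.le _
      nlinarith [sq_nonneg ((n:ℝ) * s ^ (n-1))]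
  calc (t ^ ((n:ℝ)/2) - 1)^2 = (s-1)^2 * (∑ i ∈ Finset.range n, s ^ i)^2 := by
        rw [h1, hgeom]; ring
    _ ≤ (t-1)^2 * ((n:ℝ)^2 * (1 + t ^ ((n:ℝ)-1))) := by
        apply mul_le_mul hs1 hsumsq (sq_nonneg _) (sq_nonneg _)
    _ = (n:ℝ)^2 * ((t-1)^2 * (1 + t ^ ((n:ℝ)-1))) := by ring

lemma aux_pointwise (k : ℤ) (hk : k ≠ 0) {t : ℝ} (ht : 0 < t) :
    (t ^ ((k:ℝ)/2) - 1)^2 ≤ (k.natAbs:ℝ)^2 *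
      (t ^ (0:ℝ) * (t-1)^2 + t ^ (((k.natAbs):ℝ)-1) * (t-1)^2
        + t ^ (-((k.natAbs):ℝ)) * (t-1)^2 + t ^ (-1:ℝ) * (t-1)^2) := by
  set n := k.natAbs with hndef
  have hn : 1 ≤ n := by omega
  have hcore := core_pointwise n hn ht
  have ht0 : t ^ (0:ℝ) = 1 := Real.rpow_zero t
  have hpos : ∀ r : ℝ, 0 < t ^ r := fun r => Real.rpow_pos_of_pos ht r
  rcases le_or_gt 0 k with hk0 | hk0
  · have hkn : (k:ℝ) = (n:ℝ) := by
      rw [hndef, Nat.cast_natAbs, Int.cast_abs]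
      exact (abs_of_nonneg (by exact_mod_cast hk0 : (0:ℝ) ≤ (k:ℝ))).symm
    rw [hkn, ht0]
    have h1 := mul_nonneg (hpos (-((n:ℝ)))).le (sq_nonneg (t-1))
    have h2 := mul_nonneg (hpos (-1:ℝ)).le (sq_nonneg (t-1))
    nlinarith [sq_nonneg ((n:ℝ))]
  · have hkn : (k:ℝ) = -(n:ℝ) := by
      rw [hndef, Nat.cast_natAbs, Int.cast_abs, abs_of_nonpos (by exact_mod_cast hk0.le : (k:ℝ) ≤ 0)]
      ring
    set u := t ^ ((n:ℝ)/2) with hu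
    have hu0 : 0 < u := hpos _
    have hLHS : (t ^ ((k:ℝ)/2) - 1)^2 = t ^ (-((n:ℝ))) * (u - 1)^2 := by
      have e1 : (k:ℝ)/2 = -((n:ℝ)/2) := by rw [hkn]; ring
      have e2 : t ^ ((k:ℝ)/2) = u⁻¹ := by rw [e1, Real.rpow_neg ht.le]
      have e3 : u^2 = t ^ ((n:ℝ)) := by
        rw [hu, ← Real.rpow_natCast (t ^ ((n:ℝ)/2)) 2, ← Real.rpow_mul ht.le]
        norm_num
      have e4 : (u⁻¹ - 1)^2 = (u-1)^2 / u^2 := by field_simp; ring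
      rw [e2, e4, e3, div_eq_mul_inv, ← Real.rpow_neg ht.le]; ring
    have hmul : t ^ (-((n:ℝ))) * (u - 1)^2 ≤
        t ^ (-((n:ℝ))) * ((n:ℝ)^2 * ((t-1)^2 * (1 + t ^ ((n:ℝ)-1)))) :=
      mul_le_mul_of_nonneg_left hcore (hpos _).le
    have hcomb : t ^ (-((n:ℝ))) * t ^ ((n:ℝ)-1) = t ^ (-1:ℝ) := by
      rw [← Real.rpow_add ht]; ring_nf
    have e5 : t ^ (-((n:ℝ))) * ((n:ℝ)^2 * ((t-1)^2 * (1 + t ^ ((n:ℝ)-1))))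
        = (n:ℝ)^2 * (t ^ (-((n:ℝ))) * (t-1)^2 + t ^ (-1:ℝ) * (t-1)^2) := by
      rw [← hcomb]; ring
    rw [hLHS, ht0]
    have h1 := mul_nonneg (sq_nonneg ((n:ℝ))) (mul_nonneg (hpos ((n:ℝ)-1)).le (sq_nonneg (t-1)))
    have h2 := mul_nonneg (sq_nonneg ((n:ℝ))) (sq_nonneg (t-1))
    rw [e5] at hmul
    linarith

set_option maxHeartbeats 2000000 in
/-- For every `k ∈ ℤ` there is `C > 0` such that for all `d > 2|k| + 2`,
`d · E[((ξ_d/d)^{k/2} − 1)²] ≤ C`, where `ξ_d` is chi-squared with `d` degrees of freedom. -/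
theorem chiSq_halfpow_second_moment_bound (k : ℤ) :
    ∃ C : ℝ, 0 < C ∧ ∀ d : ℕ, 2 * k.natAbs + 2 < d →
      (d : ℝ) * ∫ x, ((x / (d : ℝ)) ^ ((k : ℝ) / 2) - 1) ^ 2 ∂(chiSq d) ≤ C := by
  rcases eq_or_ne k 0 with rfl | hk
  · refine ⟨1, one_pos, fun d _ => ?_⟩
    have h0 : ∀ x : ℝ, ((x / (d:ℝ)) ^ (((0:ℤ):ℝ)/2) - 1)^2 = 0 := by
      intro x; norm_num
    simp only [h0, integral_zero, mul_zero]
    norm_num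
  set n := k.natAbs with hndef
  have hn1 : 1 ≤ n := by omega
  have hn0 : (1:ℝ) ≤ (n:ℝ) := by exact_mod_cast hn1
  refine ⟨(n:ℝ)^2 * (4*(n:ℝ)^2+4*(n:ℝ)+2) * (2^n + ((n:ℝ)+1)^n + (n:ℝ) + 2), ?_, fun d hd => ?_⟩
  · have h1 : (0:ℝ) < (n:ℝ)^2 := by positivity
    have h2 : (0:ℝ) < 4*(n:ℝ)^2+4*(n:ℝ)+2 := by positivity
    have h3 : (0:ℝ) < 2^n + ((n:ℝ)+1)^n + (n:ℝ) + 2 := by positivity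
    positivity
  -- main case
  have hd0 : 0 < d := by omega
  have hdpos : (0:ℝ) < (d:ℝ) := by exact_mod_cast hd0
  have hdR : 2*(n:ℝ)+2 < (d:ℝ) := by exact_mod_cast hd
  have hdR1 : (1:ℝ) ≤ (d:ℝ) := by linarith
  have haN : (n:ℝ) + 1 < (d:ℝ)/2 := by linarith
  have hΓa : 0 < Real.Gamma ((d:ℝ)/2) := Real.Gamma_pos_of_pos (by linarith)
  set G : ℝ → ℝ := fun r => ((d:ℝ)) ^ (-r) * (2 ^ r * Real.Gamma ((d:ℝ)/2 + r) / Real.Gamma ((d:ℝ)/2)) with hGdef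
  have hGpos : ∀ r : ℝ, 0 < (d:ℝ)/2 + r → 0 < G r := by
    intro r hr
    have h1 : (0:ℝ) < (d:ℝ) ^ (-r) := Real.rpow_pos_of_pos hdpos _
    have h2 : (0:ℝ) < (2:ℝ) ^ r := Real.rpow_pos_of_pos two_pos _
    have h3 := Real.Gamma_pos_of_pos hr
    exact mul_pos h1 (div_pos (mul_pos h2 h3) hΓa)
  have hmom : ∀ r : ℝ, 0 < (d:ℝ)/2 + r →
      Integrable (fun x => (x/(d:ℝ)) ^ r) (chiSq d) ∧
      ∫ x, (x/(d:ℝ)) ^ r ∂(chiSq d) = G r := by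
    intro r hr
    obtain ⟨hint, hval⟩ := chiSq_rpow d hd0 hr
    have haeq : (fun x : ℝ => x ^ r / ((d:ℝ))^r) =ᵐ[chiSq d] fun x => (x/(d:ℝ))^r :=
      (chiSq_ae_pos d).mono fun x hx => (Real.div_rpow hx.le hdpos.le r).symm
    constructor
    · exact (hint.div_const _).congr haeq
    · rw [← integral_congr_ae haeq, integral_div, hval]
      simp only [hGdef]
      rw [Real.rpow_neg hdpos.le]
      ring
  have hrec : ∀ r : ℝ, 0 < (d:ℝ)/2 + r → G (r+1) = (1 + 2*r/(d:ℝ)) * G r := by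
    intro r hr
    have hΓ : Real.Gamma ((d:ℝ)/2 + (r+1)) = ((d:ℝ)/2 + r) * Real.Gamma ((d:ℝ)/2+r) := by
      rw [show (d:ℝ)/2 + (r+1) = ((d:ℝ)/2 + r) + 1 by ring, Real.Gamma_add_one (ne_of_gt hr)]
    show ((d:ℝ)) ^ (-(r+1)) * (2 ^ (r+1) * Real.Gamma ((d:ℝ)/2 + (r+1)) / Real.Gamma ((d:ℝ)/2)) = _
    rw [hΓ, show -(r+1) = -r + (-1) by ring, Real.rpow_add hdpos, Real.rpow_neg_one,
      Real.rpow_add two_pos, Real.rpow_one, hGdef]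
    field_simp
  have hJ : ∀ r : ℝ, 0 < (d:ℝ)/2 + r →
      Integrable (fun x => (x/(d:ℝ))^r * (x/(d:ℝ) - 1)^2) (chiSq d) ∧
      ∫ x, (x/(d:ℝ))^r * (x/(d:ℝ)-1)^2 ∂(chiSq d) = G (r+2) - 2*G (r+1) + G r := by
    intro r hr
    have h0 := hmom r hr
    have h1 := hmom (r+1) (by linarith)
    have h2 := hmom (r+2) (by linarith)
    have haeq : (fun x : ℝ => (x/(d:ℝ))^(r+2) - 2*(x/(d:ℝ))^(r+1) + (x/(d:ℝ))^r)
        =ᵐ[chiSq d] fun x => (x/(d:ℝ))^r * (x/(d:ℝ)-1)^2 := by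
      refine (chiSq_ae_pos d).mono fun x hx => ?_
      have ht : 0 < x/(d:ℝ) := div_pos hx hdpos
      have e1 : (x/(d:ℝ))^(r+1) = (x/(d:ℝ))^r * (x/(d:ℝ)) := by
        rw [Real.rpow_add ht, Real.rpow_one]
      have e2 : (x/(d:ℝ))^(r+2) = (x/(d:ℝ))^r * (x/(d:ℝ))^2 := by
        rw [Real.rpow_add ht, Real.rpow_two]
      simp only [e1, e2]
      ring
    have hmul1 : Integrable (fun x : ℝ => 2 * (x/(d:ℝ))^(r+1)) (chiSq d) := h1.1.const_mul 2
    have hsub : Integrable (fun x : ℝ => (x/(d:ℝ))^(r+2) - 2*(x/(d:ℝ))^(r+1)) (chiSq d) :=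
      h2.1.sub hmul1
    refine ⟨(hsub.add h0.1).congr haeq, ?_⟩
    rw [← integral_congr_ae haeq, integral_add hsub h0.1,
      integral_sub h2.1 hmul1, integral_const_mul, h0.2, h1.2, h2.2]
  have hd2 : ∀ r : ℝ, 0 < (d:ℝ)/2 + r → |r| ≤ (n:ℝ) →
      (d:ℝ) * (G (r+2) - 2*G (r+1) + G r) ≤ (4*(n:ℝ)^2 + 4*(n:ℝ) + 2) * G r := by
    intro r hr hrn
    obtain ⟨hrl, hru⟩ := abs_le.1 hrn
    have h1 := hrec r hr
    have h2 := hrec (r+1) (by linarith)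
    rw [show r+1+1 = r+2 by ring] at h2
    rw [h2, h1]
    have hg := hGpos r hr
    have e : (d:ℝ) * ((1+2*(r+1)/(d:ℝ))*((1+2*r/(d:ℝ))*G r) - 2*((1+2*r/(d:ℝ))*G r) + G r)
        = (4*r^2/(d:ℝ) + 4*r/(d:ℝ) + 2) * G r := by field_simp; ring
    rw [e]
    refine mul_le_mul_of_nonneg_right ?_ hg.le
    have hr2 : r^2 ≤ (n:ℝ)^2 := sq_le_sq' hrl hru
    have hA : 4*r^2/(d:ℝ) ≤ 4*(n:ℝ)^2 := by
      have := div_le_self (by positivity : (0:ℝ) ≤ 4*r^2) hdR1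
      linarith
    have hB : 4*r/(d:ℝ) ≤ 4*(n:ℝ) := by
      rcases le_or_gt 0 r with h | h
      · have h5 := div_le_self h hdR1
        have h4 : 4*r/(d:ℝ) = 4*(r/(d:ℝ)) := by ring
        linarith
      · have h5 : r/(d:ℝ) ≤ 0 := div_nonpos_of_nonpos_of_nonneg h.le hdpos.le
        have h4 : 4*r/(d:ℝ) = 4*(r/(d:ℝ)) := by ring
        linarith
    linarith
  have hG0 : G 0 = 1 := by
    show ((d:ℝ)) ^ (-(0:ℝ)) * (2 ^ (0:ℝ) * Real.Gamma ((d:ℝ)/2 + 0) / Real.Gamma ((d:ℝ)/2)) = 1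
    rw [neg_zero, Real.rpow_zero, Real.rpow_zero, add_zero, one_mul, one_mul, div_self hΓa.ne']
  have hGnat : ∀ m : ℕ, m ≤ n + 1 → G (m:ℝ) ≤ 2 ^ m := by
    intro m
    induction m with
    | zero => intro _; simp only [Nat.cast_zero, pow_zero, hG0, le_refl]
    | succ m ih =>
      intro hm
      have hrm : 0 < (d:ℝ)/2 + (m:ℝ) := by positivity
      have hrec' := hrec (m:ℝ) hrm
      rw [show ((m+1:ℕ):ℝ) = (m:ℝ)+1 by push_cast; ring, hrec']
      have hmn : (m:ℝ) ≤ (n:ℝ) + 1 := by exact_mod_cast Nat.le_of_succ_le_succ (Nat.succ_le_succ (by omega : m ≤ n+1))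
      have hfac : 1 + 2*(m:ℝ)/(d:ℝ) ≤ 2 := by
        have h2 : 2*(m:ℝ)/(d:ℝ) ≤ 1 := by rw [div_le_one hdpos]; linarith
        linarith
      have hGm := hGpos (m:ℝ) hrm
      calc (1 + 2*(m:ℝ)/(d:ℝ)) * G (m:ℝ) ≤ 2 * 2^m :=
            mul_le_mul hfac (ih (by omega)) hGm.le (by norm_num)
        _ = 2^(m+1) := by ring
  have hGneg : ∀ m : ℕ, m ≤ n → G (-(m:ℝ)) ≤ ((n:ℝ)+1) ^ m := by
    intro m
    induction m with
    | zero => intro _; simp only [Nat.cast_zero, neg_zero, pow_zero, hG0, le_refl]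
    | succ m ih =>
      intro hm
      have hmn : (m:ℝ) + 1 ≤ (n:ℝ) := by exact_mod_cast hm
      have hr : 0 < (d:ℝ)/2 + (-((m:ℝ)+1)) := by linarith
      have hrec' := hrec (-((m:ℝ)+1)) hr
      rw [show -((m:ℝ)+1)+1 = -(m:ℝ) by ring] at hrec'
      have hGm1 := hGpos (-((m:ℝ)+1)) hr
      have hnum : (d:ℝ) ≤ ((n:ℝ)+1)*((d:ℝ) - 2*((m:ℝ)+1)) := by
        nlinarith [mul_nonneg (by linarith : (0:ℝ) ≤ (n:ℝ)) (by linarith : (0:ℝ) ≤ (d:ℝ) - 2*(n:ℝ) - 2),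
          mul_nonneg (by linarith : (0:ℝ) ≤ (n:ℝ)+1) (by linarith : (0:ℝ) ≤ (n:ℝ) - (m:ℝ) - 1)]
      have hc1 : 1 ≤ (1 + 2*(-((m:ℝ)+1))/(d:ℝ)) * ((n:ℝ)+1) := by
        have he : 1 + 2*(-((m:ℝ)+1))/(d:ℝ) = ((d:ℝ) - 2*((m:ℝ)+1))/(d:ℝ) := by
          field_simp; ring
        rw [he, div_mul_eq_mul_div, le_div_iff₀ hdpos]
        nlinarith [hnum]
      have hcast : -(((m+1:ℕ)):ℝ) = -((m:ℝ)+1) := by push_cast; ring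
      rw [hcast]
      have hGm := ih (by omega)
      have key : G (-((m:ℝ)+1)) ≤ G (-(m:ℝ)) * ((n:ℝ)+1) := by
        have h5 : G (-((m:ℝ)+1)) * 1 ≤ G (-((m:ℝ)+1)) * ((1 + 2*(-((m:ℝ)+1))/(d:ℝ)) * ((n:ℝ)+1)) :=
          mul_le_mul_of_nonneg_left hc1 hGm1.le
        calc G (-((m:ℝ)+1)) = G (-((m:ℝ)+1)) * 1 := by ring
          _ ≤ G (-((m:ℝ)+1)) * ((1 + 2*(-((m:ℝ)+1))/(d:ℝ)) * ((n:ℝ)+1)) := h5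
          _ = G (-(m:ℝ)) * ((n:ℝ)+1) := by rw [hrec']; ring
      calc G (-((m:ℝ)+1)) ≤ G (-(m:ℝ)) * ((n:ℝ)+1) := key
        _ ≤ ((n:ℝ)+1)^m * ((n:ℝ)+1) := mul_le_mul_of_nonneg_right hGm (by linarith)
        _ = ((n:ℝ)+1)^(m+1) := by ring
  -- put it together
  have hb0 : 0 < (d:ℝ)/2 + (0:ℝ) := by linarith
  have hb1 : 0 < (d:ℝ)/2 + ((n:ℝ)-1) := by linarith
  have hb2 : 0 < (d:ℝ)/2 + (-((n:ℝ))) := by linarith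
  have hb3 : 0 < (d:ℝ)/2 + (-1:ℝ) := by linarith
  obtain ⟨hJ0i, hJ0v⟩ := hJ 0 hb0
  obtain ⟨hJ1i, hJ1v⟩ := hJ ((n:ℝ)-1) hb1
  obtain ⟨hJ2i, hJ2v⟩ := hJ (-((n:ℝ))) hb2
  obtain ⟨hJ3i, hJ3v⟩ := hJ (-1:ℝ) hb3
  set g : ℝ → ℝ := fun x => (n:ℝ)^2 *
      ((x/(d:ℝ))^(0:ℝ)*(x/(d:ℝ)-1)^2 + (x/(d:ℝ))^((n:ℝ)-1)*(x/(d:ℝ)-1)^2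
        + (x/(d:ℝ))^(-((n:ℝ)))*(x/(d:ℝ)-1)^2 + (x/(d:ℝ))^(-1:ℝ)*(x/(d:ℝ)-1)^2) with hgdef
  have hgint : Integrable g (chiSq d) := (((hJ0i.add hJ1i).add hJ2i).add hJ3i).const_mul _
  have hle : ∫ x, ((x/(d:ℝ)) ^ ((k:ℝ)/2) - 1)^2 ∂(chiSq d) ≤ ∫ x, g x ∂(chiSq d) := by
    refine integral_mono_of_nonneg (Eventually.of_forall fun x => sq_nonneg _) hgint ?_
    refine (chiSq_ae_pos d).mono fun x hx => ?_
    exact aux_pointwise k hk (div_pos hx hdpos)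
  have hI01 : Integrable (fun x : ℝ => (x/(d:ℝ))^(0:ℝ)*(x/(d:ℝ)-1)^2
      + (x/(d:ℝ))^((n:ℝ)-1)*(x/(d:ℝ)-1)^2) (chiSq d) := hJ0i.add hJ1i
  have hI012 : Integrable (fun x : ℝ => ((x/(d:ℝ))^(0:ℝ)*(x/(d:ℝ)-1)^2
      + (x/(d:ℝ))^((n:ℝ)-1)*(x/(d:ℝ)-1)^2) + (x/(d:ℝ))^(-((n:ℝ)))*(x/(d:ℝ)-1)^2) (chiSq d) :=
    hI01.add hJ2i
  have hgval : ∫ x, g x ∂(chiSq d) = (n:ℝ)^2 *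
      ((G (0+2) - 2*G (0+1) + G 0) + (G ((n:ℝ)-1+2) - 2*G ((n:ℝ)-1+1) + G ((n:ℝ)-1))
        + (G (-((n:ℝ))+2) - 2*G (-((n:ℝ))+1) + G (-((n:ℝ))))
        + (G ((-1:ℝ)+2) - 2*G ((-1:ℝ)+1) + G (-1:ℝ))) := by
    rw [hgdef]
    rw [integral_const_mul, integral_add hI012 hJ3i,
      integral_add hI01 hJ2i, integral_add hJ0i hJ1i,
      hJ0v, hJ1v, hJ2v, hJ3v]
  have hB0 := hd2 0 hb0 (by rw [abs_zero]; linarith)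
  have hB1 := hd2 ((n:ℝ)-1) hb1 (by rw [abs_of_nonneg (by linarith)]; linarith)
  have hB2 := hd2 (-((n:ℝ))) hb2 (by rw [abs_of_nonpos (by linarith)]; linarith)
  have hB3 := hd2 (-1:ℝ) hb3 (by rw [abs_of_nonpos (by norm_num)]; norm_num; linarith)
  have hGb1 : G ((n:ℝ)-1) ≤ 2^n := by
    have hc : ((n-1:ℕ):ℝ) = (n:ℝ)-1 := by
      have := Nat.cast_sub (R := ℝ) hn1
      simpa using this
    rw [← hc]
    calc G ((n-1:ℕ):ℝ) ≤ 2^(n-1) := hGnat (n-1) (by omega)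
      _ ≤ 2^n := pow_le_pow_right₀ one_le_two (by omega)
  have hGb2 : G (-((n:ℝ))) ≤ ((n:ℝ)+1)^n := hGneg n le_rfl
  have hGb3 : G (-1:ℝ) ≤ (n:ℝ)+1 := by
    have := hGneg 1 hn1
    simpa using this
  set K : ℝ := 4*(n:ℝ)^2+4*(n:ℝ)+2 with hKdef
  have hK : (0:ℝ) ≤ K := by positivity
  have hsum : (d:ℝ) * ((G (0+2) - 2*G (0+1) + G 0) + (G ((n:ℝ)-1+2) - 2*G ((n:ℝ)-1+1) + G ((n:ℝ)-1))
        + (G (-((n:ℝ))+2) - 2*G (-((n:ℝ))+1) + G (-((n:ℝ))))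
        + (G ((-1:ℝ)+2) - 2*G ((-1:ℝ)+1) + G (-1:ℝ)))
      ≤ K * (2^n + ((n:ℝ)+1)^n + (n:ℝ) + 2) := by
    have m0 : K * G 0 = K := by rw [hG0]; ring
    have m1 : K * G ((n:ℝ)-1) ≤ K * 2^n := mul_le_mul_of_nonneg_left hGb1 hK
    have m2 : K * G (-((n:ℝ))) ≤ K * ((n:ℝ)+1)^n := mul_le_mul_of_nonneg_left hGb2 hK
    have m3 : K * G (-1:ℝ) ≤ K * ((n:ℝ)+1) := mul_le_mul_of_nonneg_left hGb3 hK
    have ee : K * (2^n + ((n:ℝ)+1)^n + (n:ℝ) + 2)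
        = K + K * 2^n + K * ((n:ℝ)+1)^n + K * ((n:ℝ)+1) := by ring
    rw [ee]
    linarith
  calc (d:ℝ) * ∫ x, ((x / (d:ℝ)) ^ ((k:ℝ)/2) - 1)^2 ∂(chiSq d)
      ≤ (d:ℝ) * ∫ x, g x ∂(chiSq d) := mul_le_mul_of_nonneg_left hle hdpos.le
    _ = (n:ℝ)^2 * ((d:ℝ) * ((G (0+2) - 2*G (0+1) + G 0)
          + (G ((n:ℝ)-1+2) - 2*G ((n:ℝ)-1+1) + G ((n:ℝ)-1))
          + (G (-((n:ℝ))+2) - 2*G (-((n:ℝ))+1) + G (-((n:ℝ))))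
          + (G ((-1:ℝ)+2) - 2*G ((-1:ℝ)+1) + G (-1:ℝ)))) := by rw [hgval]; ring
    _ ≤ (n:ℝ)^2 * (K * (2^n + ((n:ℝ)+1)^n + (n:ℝ) + 2)) :=
        mul_le_mul_of_nonneg_left hsum (sq_nonneg _)
    _ = (n:ℝ)^2 * (4*(n:ℝ)^2+4*(n:ℝ)+2) * (2^n + ((n:ℝ)+1)^n + (n:ℝ) + 2) := by
        rw [hKdef]; ring
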